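/- Let k be a field of characteristic ≠ 2, r ≥ 3 an integer, and K = k(a_1, …, a_{r−1}) the rational function field in r−1 independent indeterminates over k. Let η ∈ k be a primitive r-th root of unity, and let σ1 and σ2 be the k-algebra automorphisms of K determined by σ1(a_i) = η^i·a_i and σ2(a_i) = a_{r−i} for 1 ≤ i ≤ r−1. Let G ≤ Aut_k(K) be the subgroup generated by σ1 and σ2, and let u_i := a_1^{r−i}·a_i + a_{r−1}^{r−i}·a_{r−i} for 1 ≤ i ≤ r−1. Then the fixed field K^G equals the intermediate field k(u_1, …, u_{r−1}) generated over k by the dihedral invariants. -/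

import Mathlib

open Module

set_option maxHeartbeats 2000000
set_option synthInstance.maxHeartbeats 1000000

/-- Two `k`-algebra automorphisms of a fraction field of a multivariate polynomial ring
agree if they agree on the images of the variables. -/
private theorem algEquiv_ext_frac {k K : Type*} [Field k] [Field K] {n : ℕ}
    [Algebra (MvPolynomial (Fin n) k) K] [IsFractionRing (MvPolynomial (Fin n) k) K]
    [Algebra k K] [IsScalarTower k (MvPolynomial (Fin n) k) K]
    (σ τ : K ≃ₐ[k] K)
    (h : ∀ i, σ (algebraMap (MvPolynomial (Fin n) k) K (MvPolynomial.X i)) =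
      τ (algebraMap (MvPolynomial (Fin n) k) K (MvPolynomial.X i))) : σ = τ := by
  have h1 : (σ.toAlgHom.comp (IsScalarTower.toAlgHom k (MvPolynomial (Fin n) k) K)) =
      (τ.toAlgHom.comp (IsScalarTower.toAlgHom k (MvPolynomial (Fin n) k) K)) :=
    MvPolynomial.algHom_ext fun i => by simpa using h i
  have h2 : (σ : K →+* K) = (τ : K →+* K) := by
    apply IsLocalization.ringHom_ext (nonZeroDivisors (MvPolynomial (Fin n) k))
    exact congrArg AlgHom.toRingHom h1
  exact AlgEquiv.ext fun x => DFunLike.congr_fun h2 x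

/-- Let `k` be a field of characteristic `≠ 2`, `r ≥ 3`, and
`K = k(a_1,…,a_(r-1))` the rational function field in `r-1` indeterminates. Let `η ∈ k` be a
primitive `r`-th root of unity, and `σ1, σ2` the `k`-automorphisms of `K` with
`σ1(a_i) = η^i·a_i`, `σ2(a_i) = a_(r-i)`. Let `G = ⟨σ1, σ2⟩` and let
`u_i = a_1^(r-i)·a_i + a_(r-1)^(r-i)·a_(r-i)` be the dihedral invariants. Then the fixed
field `K^G` equals `k(u_1,…,u_(r-1))`. -/
theorem fixedField_eq_adjoin_dihedral_invariants {k K : Type*} [Field k] [Field K]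
    (hchar : ringChar k ≠ 2) (r : ℕ) (hr : 3 ≤ r)
    [Algebra (MvPolynomial (Fin (r - 1)) k) K]
    [IsFractionRing (MvPolynomial (Fin (r - 1)) k) K]
    [Algebra k K] [IsScalarTower k (MvPolynomial (Fin (r - 1)) k) K]
    (a : ℕ → K)
    (ha : ∀ i : Fin (r - 1),
      a (i.1 + 1) = algebraMap (MvPolynomial (Fin (r - 1)) k) K (MvPolynomial.X i))
    (η : k) (hη : IsPrimitiveRoot η r)
    (σ1 σ2 : K ≃ₐ[k] K)
    (hσ1 : ∀ i : ℕ, 1 ≤ i → i ≤ r - 1 → σ1 (a i) = algebraMap k K (η ^ i) * a i)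
    (hσ2 : ∀ i : ℕ, 1 ≤ i → i ≤ r - 1 → σ2 (a i) = a (r - i))
    (u : ℕ → K)
    (hu : ∀ i : ℕ, u i = a 1 ^ (r - i) * a i + a (r - 1) ^ (r - i) * a (r - i)) :
    IntermediateField.fixedField (Subgroup.closure ({σ1, σ2} : Set (K ≃ₐ[k] K))) =
      IntermediateField.adjoin k {x : K | ∃ i : ℕ, 1 ≤ i ∧ i ≤ r - 1 ∧ x = u i} := by
  classical
  haveI : NeZero r := ⟨by omega⟩
  haveI : Fact (1 < r) := ⟨by omega⟩
  -- notation
  set G : Subgroup (K ≃ₐ[k] K) := Subgroup.closure ({σ1, σ2} : Set (K ≃ₐ[k] K)) with hG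
  set F : IntermediateField k K :=
    IntermediateField.adjoin k {x : K | ∃ i : ℕ, 1 ≤ i ∧ i ≤ r - 1 ∧ x = u i} with hF
  -- basic characteristic facts
  have h2k : (2 : k) ≠ 0 := by
    intro h
    have hd := ringChar.dvd (x := 2) (by exact_mod_cast h)
    rcases (Nat.dvd_prime Nat.prime_two).mp hd with h1 | h1
    · exact CharP.char_ne_one k (ringChar k) h1
    · exact hchar h1
  have h2K : (2 : K) ≠ 0 := by
    have h := (map_ne_zero_iff (algebraMap k K) (algebraMap k K).injective).mpr h2k
    rwa [map_ofNat] at h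
  -- the generators as images of variables
  have injA : Function.Injective (algebraMap (MvPolynomial (Fin (r - 1)) k) K) :=
    IsFractionRing.injective _ _
  have ha1 : a 1 = algebraMap (MvPolynomial (Fin (r - 1)) k) K
      (MvPolynomial.X (⟨0, by omega⟩ : Fin (r - 1))) := by
    simpa using ha ⟨0, by omega⟩
  have har1 : a (r - 1) = algebraMap (MvPolynomial (Fin (r - 1)) k) K
      (MvPolynomial.X (⟨r - 2, by omega⟩ : Fin (r - 1))) := by
    have h := ha ⟨r - 2, by omega⟩
    simpa only [show r - 2 + 1 = r - 1 from by omega] using h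
  have hane : ∀ i : ℕ, 1 ≤ i → i ≤ r - 1 → a i ≠ 0 := by
    intro i h1 h2
    have hj : i - 1 < r - 1 := by omega
    have h := ha ⟨i - 1, hj⟩
    rw [show i - 1 + 1 = i from by omega] at h
    rw [h]
    exact (map_ne_zero_iff _ injA).mpr (MvPolynomial.X_ne_zero _)
  -- `a 1` and `a (r-1)` are independent over `k`
  have hne : ∀ c : k, algebraMap k K c * a (r - 1) ≠ a 1 := by
    intro c hc
    rw [ha1, har1, IsScalarTower.algebraMap_apply k (MvPolynomial (Fin (r - 1)) k) K,
      ← map_mul] at hc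
    have hpoly := injA hc
    have hcoeff := congrArg
      (MvPolynomial.coeff (Finsupp.single (⟨0, by omega⟩ : Fin (r - 1)) 1)) hpoly
    rw [MvPolynomial.algebraMap_eq, MvPolynomial.coeff_C_mul, MvPolynomial.coeff_X,
      MvPolynomial.coeff_X'] at hcoeff
    rw [if_neg, mul_zero] at hcoeff
    · exact zero_ne_one (hcoeff.trans (if_pos rfl))
    · intro h
      have := (Finsupp.single_left_injective one_ne_zero).eq_iff.mp h
      have h02 : (⟨r - 2, by omega⟩ : Fin (r - 1)) ≠ ⟨0, by omega⟩ := by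
        intro hh
        have := Fin.mk.injEq (r - 2) _ 0 _ ▸ hh
        simp only [Fin.mk.injEq] at hh
        omega
      exact h02 this
  have hDelta : a 1 ^ r - a (r - 1) ^ r ≠ 0 := by
    intro hD
    have hc : a 1 ^ r = a (r - 1) ^ r := by linear_combination hD
    rw [ha1, har1, ← map_pow, ← map_pow] at hc
    have hpoly := injA hc
    rw [MvPolynomial.X_pow_eq_monomial, MvPolynomial.X_pow_eq_monomial] at hpoly
    have hcoeff := congrArg
      (MvPolynomial.coeff (Finsupp.single (⟨0, by omega⟩ : Fin (r - 1)) r)) hpoly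
    rw [MvPolynomial.coeff_monomial, MvPolynomial.coeff_monomial, if_pos rfl, if_neg] at hcoeff
    · exact one_ne_zero hcoeff
    · intro h
      have := (Finsupp.single_left_injective (NeZero.ne r)).eq_iff.mp h
      simp only [Fin.mk.injEq] at this
      omega
  -- extensionality on the generators
  have ext2 : ∀ σ τ : K ≃ₐ[k] K,
      (∀ i : ℕ, 1 ≤ i → i ≤ r - 1 → σ (a i) = τ (a i)) → σ = τ := by
    intro σ τ h
    apply algEquiv_ext_frac (n := r - 1) σ τ
    intro j
    have hj := ha j
    have hb : 1 ≤ j.1 + 1 ∧ j.1 + 1 ≤ r - 1 := by omega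
    rw [← hj]
    exact h (j.1 + 1) hb.1 hb.2
  -- action of powers of σ1
  have hσ1pow : ∀ (n i : ℕ), 1 ≤ i → i ≤ r - 1 →
      (σ1 ^ n) (a i) = algebraMap k K (η ^ (n * i)) * a i := by
    intro n
    induction n with
    | zero => intro i h1 h2; simp
    | succ m ih =>
      intro i h1 h2
      rw [pow_succ, AlgEquiv.mul_apply, hσ1 i h1 h2, map_mul, AlgEquiv.commutes, ih i h1 h2,
        ← mul_assoc, ← map_mul, ← pow_add]
      congr 2
      ring
  -- η-exponent arithmetic mod r
  have hηmod : ∀ A B : ℕ, (A : ZMod r) = (B : ZMod r) → η ^ A = η ^ B := by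
    intro A B h
    have hmod : A % r = B % r := (ZMod.natCast_eq_natCast_iff' A B r).mp h
    conv_lhs => rw [← Nat.div_add_mod A r]
    conv_rhs => rw [← Nat.div_add_mod B r]
    rw [pow_add, pow_add, pow_mul, pow_mul, hη.pow_eq_one, one_pow, one_pow, hmod]
  -- σ1 has order dividing r
  have hσ1r : σ1 ^ r = 1 := by
    apply ext2
    intro i h1 h2
    rw [hσ1pow r i h1 h2, AlgEquiv.one_apply]
    have : η ^ (r * i) = η ^ 0 := hηmod (r * i) 0 (by push_cast [ZMod.natCast_self]; ring)
    rw [this, pow_zero, map_one, one_mul]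
  -- powers of σ1 mod r
  have hpow_eq : ∀ A B : ℕ, (A : ZMod r) = (B : ZMod r) → σ1 ^ A = σ1 ^ B := by
    intro A B h
    have hmod : A % r = B % r := (ZMod.natCast_eq_natCast_iff' A B r).mp h
    conv_lhs => rw [← Nat.div_add_mod A r]
    conv_rhs => rw [← Nat.div_add_mod B r]
    rw [pow_add, pow_add, pow_mul, pow_mul, hσ1r, one_pow, one_pow, hmod]
  -- σ2 is an involution
  have hσ22 : σ2 * σ2 = 1 := by
    apply ext2
    intro i h1 h2
    have hb : 1 ≤ r - i ∧ r - i ≤ r - 1 := by omega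
    rw [AlgEquiv.mul_apply, hσ2 i h1 h2, hσ2 (r - i) hb.1 hb.2, AlgEquiv.one_apply,
      show r - (r - i) = i from by omega]
  -- the basic dihedral relation
  have hrel : σ2 * σ1 = σ1 ^ (r - 1) * σ2 := by
    apply ext2
    intro i h1 h2
    have hb : 1 ≤ r - i ∧ r - i ≤ r - 1 := by omega
    rw [AlgEquiv.mul_apply, AlgEquiv.mul_apply, hσ1 i h1 h2, map_mul, AlgEquiv.commutes,
      hσ2 i h1 h2, hσ1pow (r - 1) (r - i) hb.1 hb.2]
    congr 2
    apply hηmod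
    push_cast [show ((r - 1 : ℕ) : ZMod r) = -1 from by
        rw [Nat.cast_sub (by omega), ZMod.natCast_self, Nat.cast_one, zero_sub],
      show ((r - i : ℕ) : ZMod r) = -(i : ZMod r) from by
        rw [Nat.cast_sub (by omega), ZMod.natCast_self, zero_sub]]
    ring
  -- moving σ2 past powers of σ1
  have hsw : ∀ m : ℕ, σ2 * σ1 ^ m = σ1 ^ (m * (r - 1)) * σ2 := by
    intro m
    induction m with
    | zero => simp
    | succ p ih =>
      rw [pow_succ, ← mul_assoc, ih, mul_assoc, hrel, ← mul_assoc, ← pow_add]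
      rw [show p * (r - 1) + (r - 1) = (p + 1) * (r - 1) from by ring]
  have hsw' : ∀ m : ℕ, σ1 ^ m * σ2 = σ2 * σ1 ^ (m * (r - 1)) := by
    intro m
    rw [hsw (m * (r - 1)), mul_assoc]
    congr 1
    apply hpow_eq
    push_cast [show ((r - 1 : ℕ) : ZMod r) = -1 from by
      rw [Nat.cast_sub (by omega), ZMod.natCast_self, Nat.cast_one, zero_sub]]
    ring
  -- value of elements of `ZMod r` cast back
  have hvv : ∀ i : ZMod r, ((i.val : ℕ) : ZMod r) = i := fun i => ZMod.natCast_rightInverse i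
  have hcr1 : ((r - 1 : ℕ) : ZMod r) = -1 := by
    rw [Nat.cast_sub (by omega), ZMod.natCast_self, Nat.cast_one, zero_sub]
  -- the homomorphism from the dihedral group
  let φ : DihedralGroup r →* (K ≃ₐ[k] K) :=
    { toFun := fun x => match x with
        | DihedralGroup.r i => σ1 ^ i.val
        | DihedralGroup.sr i => σ2 * σ1 ^ i.val
      map_one' := by
        show σ1 ^ (0 : ZMod r).val = 1
        rw [ZMod.val_zero, pow_zero]
      map_mul' := by
        rintro (i | i) (j | j)
        · show σ1 ^ ((i + j).val) = σ1 ^ i.val * σ1 ^ j.val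
          rw [← pow_add]
          apply hpow_eq
          push_cast [hvv]
          ring
        · show σ2 * σ1 ^ ((j - i).val) = σ1 ^ i.val * (σ2 * σ1 ^ j.val)
          rw [← mul_assoc, hsw' i.val, mul_assoc, ← pow_add]
          congr 1
          apply hpow_eq
          push_cast [hvv, hcr1]
          ring
        · show σ2 * σ1 ^ ((i + j).val) = σ2 * σ1 ^ i.val * σ1 ^ j.val
          rw [mul_assoc, ← pow_add]
          congr 1
          apply hpow_eq
          push_cast [hvv]
          ring
        · show σ1 ^ ((j - i).val) = σ2 * σ1 ^ i.val * (σ2 * σ1 ^ j.val)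
          rw [mul_assoc, ← mul_assoc (σ1 ^ i.val), hsw' i.val, ← mul_assoc, ← mul_assoc,
            hσ22, one_mul, ← pow_add]
          apply hpow_eq
          push_cast [hvv, hcr1]
          ring }
  -- φ is injective
  have hφinj : Function.Injective φ := by
    rw [injective_iff_map_eq_one]
    rintro (i | i) h
    · have h' : σ1 ^ i.val = 1 := h
      have hval := congrArg (fun ψ : K ≃ₐ[k] K => ψ (a 1)) h'
      simp only [AlgEquiv.one_apply] at hval
      rw [hσ1pow i.val 1 le_rfl (by omega), mul_one] at hval
      have hη1 : η ^ i.val = 1 := by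
        have := mul_right_cancel₀ (hane 1 le_rfl (by omega))
          (hval.trans (one_mul (a 1)).symm)
        exact (algebraMap k K).injective (by rwa [map_one])
      have := (IsPrimitiveRoot.pow_eq_one_iff_dvd hη i.val).mp hη1
      have hlt : i.val < r := ZMod.val_lt i
      have hz : i.val = 0 := Nat.eq_zero_of_dvd_of_lt this hlt
      congr
      exact (ZMod.val_eq_zero i).mp hz
    · exfalso
      have h' : σ2 * σ1 ^ i.val = 1 := h
      have hval := congrArg (fun ψ : K ≃ₐ[k] K => ψ (a 1)) h'
      simp only [AlgEquiv.one_apply, AlgEquiv.mul_apply] at hval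
      rw [hσ1pow i.val 1 le_rfl (by omega), mul_one, map_mul, AlgEquiv.commutes,
        hσ2 1 le_rfl (by omega)] at hval
      exact hne (η ^ i.val) hval
  -- the closure is the range of φ
  have hrange : φ.range = G := by
    apply le_antisymm
    · rintro x ⟨y, rfl⟩
      have hσ1G : σ1 ∈ G := Subgroup.subset_closure (by simp)
      have hσ2G : σ2 ∈ G := Subgroup.subset_closure (by simp)
      rcases y with i | i
      · exact pow_mem hσ1G i.val
      · exact mul_mem hσ2G (pow_mem hσ1G i.val)
    · rw [hG]
      apply Subgroup.closure_le _ |>.mpr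
      intro x hx
      rcases hx with hx | hx
      · refine ⟨DihedralGroup.r 1, ?_⟩
        rw [hx]
        show σ1 ^ (1 : ZMod r).val = σ1
        rw [ZMod.val_one, pow_one]
      · refine ⟨DihedralGroup.sr 0, ?_⟩
        rw [hx]
        show σ2 * σ1 ^ (0 : ZMod r).val = σ2
        rw [ZMod.val_zero, pow_zero, mul_one]
  have hGfin : Finite G := by
    rw [← hrange]
    exact Set.Finite.to_subtype (Set.finite_range φ)
  haveI := hGfin
  haveI : Fintype G := Fintype.ofFinite G
  have hGcard : Fintype.card G = 2 * r := by
    rw [← Nat.card_eq_fintype_card, ← hrange,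
      Nat.card_congr (MonoidHom.ofInjective hφinj).toEquiv.symm, DihedralGroup.nat_card]
  -- the invariants are fixed by σ1
  have hri : ∀ i : ℕ, 1 ≤ i → i ≤ r - 1 → ((r - i : ℕ) : ZMod r) = -(i : ZMod r) := by
    intro i h1 h2
    rw [Nat.cast_sub (by omega), ZMod.natCast_self, zero_sub]
  have fix1 : ∀ i : ℕ, 1 ≤ i → i ≤ r - 1 → σ1 (u i) = u i := by
    intro i h1 h2
    have hb : 1 ≤ r - i ∧ r - i ≤ r - 1 := by omega
    rw [hu i, map_add, map_mul, map_mul, map_pow, map_pow,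
      hσ1 1 le_rfl (by omega), hσ1 i h1 h2, hσ1 (r - 1) (by omega) le_rfl,
      hσ1 (r - i) hb.1 hb.2]
    have hc1 : algebraMap k K (η ^ 1) ^ (r - i) * algebraMap k K (η ^ i) = 1 := by
      rw [← map_pow, ← map_mul, ← pow_mul, ← pow_add]
      rw [hηmod (1 * (r - i) + i) 0 (by push_cast [hri i h1 h2]; ring), pow_zero, map_one]
    have hc2 : algebraMap k K (η ^ (r - 1)) ^ (r - i) * algebraMap k K (η ^ (r - i)) = 1 := by
      rw [← map_pow, ← map_mul, ← pow_mul, ← pow_add]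
      rw [hηmod ((r - 1) * (r - i) + (r - i)) 0
        (by push_cast [hri i h1 h2, hcr1]; ring), pow_zero, map_one]
    linear_combination (a 1 ^ (r - i) * a i) * hc1 +
      (a (r - 1) ^ (r - i) * a (r - i)) * hc2
  -- the invariants are fixed by σ2
  have fix2 : ∀ i : ℕ, 1 ≤ i → i ≤ r - 1 → σ2 (u i) = u i := by
    intro i h1 h2
    have hb : 1 ≤ r - i ∧ r - i ≤ r - 1 := by omega
    rw [hu i, map_add, map_mul, map_mul, map_pow, map_pow,
      hσ2 1 le_rfl (by omega), hσ2 i h1 h2, hσ2 (r - 1) (by omega) le_rfl,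
      hσ2 (r - i) hb.1 hb.2, show r - (r - 1) = 1 from by omega,
      show r - (r - i) = i from by omega]
    ring
  -- the easy inclusion
  have hFE : F ≤ IntermediateField.fixedField G := by
    rw [hF]
    apply IntermediateField.adjoin_le_iff.mpr
    rintro x ⟨i, h1, h2, rfl⟩
    have key : ∀ g ∈ G, g (u i) = u i := by
      intro g hg
      rw [hG] at hg
      induction hg using Subgroup.closure_induction with
      | mem y hy =>
        rcases hy with hy | hy
        · rw [hy]; exact fix1 i h1 h2
        · rw [hy]; exact fix2 i h1 h2
      | one => rfl
      | mul y z _ _ hy hz => rw [AlgEquiv.mul_apply, hz, hy]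
      | inv y _ hy =>
        show y.symm (u i) = u i
        apply y.injective
        rw [AlgEquiv.apply_symm_apply, hy]
    exact fun g => key g.1 g.2
  -- membership of the invariants
  have humem : ∀ i : ℕ, 1 ≤ i → i ≤ r - 1 → u i ∈ F := by
    intro i h1 h2
    rw [hF]
    exact IntermediateField.subset_adjoin _ _ ⟨i, h1, h2, rfl⟩
  have h2F : (2 : K) ∈ F := by
    rw [show (2 : K) = algebraMap k K 2 from by rw [map_ofNat]]
    exact F.algebraMap_mem 2
  -- K is generated over F by a 1
  set M : IntermediateField F K := IntermediateField.adjoin F {a 1} with hM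
  have haM : a 1 ∈ M := IntermediateField.subset_adjoin _ _ rfl
  have hFM : ∀ x : K, x ∈ F → x ∈ M := fun x hx => M.algebraMap_mem ⟨x, hx⟩
  have hur1 : u (r - 1) = 2 * (a 1 * a (r - 1)) := by
    rw [hu (r - 1), show r - (r - 1) = 1 from by omega]
    ring
  have h2a1 : (2 : K) * a 1 ≠ 0 := mul_ne_zero h2K (hane 1 le_rfl (by omega))
  have har1M : a (r - 1) ∈ M := by
    have hdiv : a (r - 1) = u (r - 1) / (2 * a 1) := by
      rw [eq_div_iff h2a1, hur1]
      ring
    rw [hdiv]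
    exact div_mem (hFM _ (humem (r - 1) (by omega) le_rfl))
      (mul_mem (hFM _ h2F) haM)
  have haiM : ∀ i : ℕ, 1 ≤ i → i ≤ r - 1 → a i ∈ M := by
    intro i h1 h2
    have hb : 1 ≤ r - i ∧ r - i ≤ r - 1 := by omega
    have hid : (a 1 ^ r - a (r - 1) ^ r) * a i =
        a 1 ^ i * u i - a (r - 1) ^ (r - i) * u (r - i) := by
      rw [hu i, hu (r - i), show r - (r - i) = i from by omega]
      have e1 : a 1 ^ i * a 1 ^ (r - i) = a 1 ^ r := by
        rw [← pow_add]
        congr 1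
        omega
      have e2 : a (r - 1) ^ (r - i) * a (r - 1) ^ i = a (r - 1) ^ r := by
        rw [← pow_add]
        congr 1
        omega
      linear_combination a i * e2 - a i * e1
    have hdiv : a i = (a 1 ^ i * u i - a (r - 1) ^ (r - i) * u (r - i)) /
        (a 1 ^ r - a (r - 1) ^ r) := by
      rw [eq_div_iff hDelta]
      linear_combination hid
    rw [hdiv]
    exact div_mem
      (sub_mem (mul_mem (pow_mem haM i) (hFM _ (humem i h1 h2)))
        (mul_mem (pow_mem har1M _) (hFM _ (humem (r - i) hb.1 hb.2))))
      (sub_mem (pow_mem haM r) (pow_mem har1M r))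
  have hpoly : ∀ p : MvPolynomial (Fin (r - 1)) k,
      algebraMap (MvPolynomial (Fin (r - 1)) k) K p ∈ M := by
    intro p
    induction p using MvPolynomial.induction_on with
    | C c =>
      have hc : algebraMap (MvPolynomial (Fin (r - 1)) k) K (MvPolynomial.C c) =
          algebraMap k K c := by
        rw [IsScalarTower.algebraMap_apply k (MvPolynomial (Fin (r - 1)) k) K,
          MvPolynomial.algebraMap_eq]
      rw [hc]
      exact hFM _ (F.algebraMap_mem c)
    | add p q hp hq =>
      rw [map_add]
      exact add_mem hp hq
    | mul_X p j hp =>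
      rw [map_mul]
      refine mul_mem hp ?_
      rw [← ha j]
      exact haiM (j.1 + 1) (by omega) (by omega)
  have hMtop : M = ⊤ := by
    rw [eq_top_iff]
    intro x _
    obtain ⟨p, q, _, hx⟩ := IsFractionRing.div_surjective
      (A := MvPolynomial (Fin (r - 1)) k) (K := K) x
    rw [← hx]
    exact div_mem (hpoly p) (hpoly q)
  -- the minimal polynomial bound
  have hu1 : u 1 = a 1 ^ r + a (r - 1) ^ r := by
    rw [hu 1]
    have e1 : a 1 ^ (r - 1) * a 1 = a 1 ^ r := by
      rw [← pow_succ]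
      congr 1
      omega
    have e2 : a (r - 1) ^ (r - 1) * a (r - 1) = a (r - 1) ^ r := by
      rw [← pow_succ]
      congr 1
      omega
    rw [e1, e2]
  have hw2 : u (r - 1) / 2 = a 1 * a (r - 1) := by
    rw [hur1]
    field_simp
  set w1 : F := ⟨u 1, humem 1 le_rfl (by omega)⟩ with hw1def
  set w2 : F := ⟨(u (r - 1) / 2) ^ r,
    pow_mem (div_mem (humem (r - 1) (by omega) le_rfl) h2F) r⟩ with hw2def
  set P : Polynomial F :=
    Polynomial.X ^ (2 * r) - Polynomial.C w1 * Polynomial.X ^ r + Polynomial.C w2 with hP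
  have hPne : P ≠ 0 := by
    intro h0
    have hc := congrArg (fun q : Polynomial F => q.coeff (2 * r)) h0
    simp only [hP, Polynomial.coeff_add, Polynomial.coeff_sub, Polynomial.coeff_X_pow,
      Polynomial.coeff_C_mul, Polynomial.coeff_C, Polynomial.coeff_zero,
      if_pos rfl, if_neg (show ¬(2 * r = r) from by omega),
      if_neg (show ¬(2 * r = 0) from by omega), mul_zero, sub_zero, add_zero] at hc
    exact one_ne_zero hc
  have hPa : Polynomial.aeval (a 1) P = 0 := by
    have hcoe1 : algebraMap F K w1 = u 1 := rfl
    have hcoe2 : algebraMap F K w2 = (u (r - 1) / 2) ^ r := rfl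
    rw [hP]
    rw [map_add, map_sub, map_pow, map_mul, map_pow, Polynomial.aeval_X,
      Polynomial.aeval_C, Polynomial.aeval_C, hcoe1, hcoe2, hw2, hu1]
    have e3 : a 1 ^ (2 * r) = a 1 ^ r * a 1 ^ r := by
      rw [← pow_add]
      congr 1
      omega
    rw [e3, mul_pow]
    ring
  have hint : IsIntegral F (a 1) := isAlgebraic_iff_isIntegral.mp ⟨P, hPne, hPa⟩
  haveI hfdM : FiniteDimensional F M := IntermediateField.adjoin.finiteDimensional hint
  let eM : M ≃ₐ[F] K := (IntermediateField.equivOfEq hMtop).trans IntermediateField.topEquiv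
  haveI hfdK : FiniteDimensional F K := LinearEquiv.finiteDimensional eM.toLinearEquiv
  have hfr : finrank F K ≤ 2 * r := by
    rw [← eM.toLinearEquiv.finrank_eq]
    rw [show finrank F M = (minpoly F (a 1)).natDegree from
      IntermediateField.adjoin.finrank hint]
    have hd : (minpoly F (a 1)).degree ≤ P.degree :=
      minpoly.degree_le_of_ne_zero F (a 1) hPne hPa
    have hnd : (minpoly F (a 1)).natDegree ≤ P.natDegree :=
      Polynomial.natDegree_le_natDegree hd
    refine le_trans hnd ?_
    rw [hP]
    refine le_trans (Polynomial.natDegree_add_le _ _) (max_le ?_ ?_)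
    · refine le_trans (Polynomial.natDegree_sub_le _ _) (max_le ?_ ?_)
      · rw [Polynomial.natDegree_X_pow]
      · refine le_trans (Polynomial.natDegree_mul_le) ?_
        rw [Polynomial.natDegree_C, Polynomial.natDegree_X_pow]
        omega
    · rw [Polynomial.natDegree_C]
      omega
  -- conclusion
  have hEfr : finrank (IntermediateField.fixedField G) K = 2 * r := by
    rw [show finrank (IntermediateField.fixedField G) K = Fintype.card G from
      FixedPoints.finrank_eq_card G K, hGcard]
  have := IntermediateField.eq_of_le_of_finrank_le' hFE (by rw [hEfr]; exact hfr)
  exact this.symm
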